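/- Let n be an even positive integer. Let 𝒜 and ℬ be cross-intersecting families of subsets of [n] with 𝒜 intersecting, and let a and b be real numbers with a ≥ b ≥ 0. Then a·|𝒜^{(n/2)}| + b·|ℬ^{(n/2)}| ≤ (a + b)·C(n−1, n/2 − 1), where C(m, k) denotes the binomial coefficient m choose k and ℱ^{(i)} denotes the subfamily of sets in ℱ of size exactly i. -/

import Mathlib

/-- If `n` is an even positive integer, `𝒜` and `ℬ` are cross-intersecting
families of subsets of `[n]` with `𝒜` intersecting, and `a ≥ b ≥ 0` are reals,
then `a·|𝒜^{(n/2)}| + b·|ℬ^{(n/2)}| ≤ (a + b)·C(n-1, n/2 - 1)`. -/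
theorem middle_level_weighted_bound
    (n : ℕ) (hn : 0 < n) (hev : Even n)
    (𝒜 ℬ : Finset (Finset ℕ))
    (h𝒜sub : ∀ A ∈ 𝒜, A ⊆ Finset.Icc 1 n)
    (hℬsub : ∀ B ∈ ℬ, B ⊆ Finset.Icc 1 n)
    (hcross : ∀ A ∈ 𝒜, ∀ B ∈ ℬ, (A ∩ B).Nonempty)
    (hint : ∀ A ∈ 𝒜, ∀ A' ∈ 𝒜, (A ∩ A').Nonempty)
    (a b : ℝ) (hb : 0 ≤ b) (hab : b ≤ a) :
    a * ((𝒜.filter (fun A => A.card = n / 2)).card : ℝ)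
        + b * ((ℬ.filter (fun B => B.card = n / 2)).card : ℝ)
      ≤ (a + b) * ((n - 1).choose (n / 2 - 1) : ℝ) := by
  obtain ⟨m, hm⟩ := hev
  set k := n / 2 with hkdef
  have hn2 : n = 2 * k := by omega
  have hkpos : 0 < k := by omega
  set U := Finset.Icc 1 n with hU
  have hUcard : U.card = n := by simp [hU]
  set 𝒜' := 𝒜.filter (fun A => A.card = k) with h𝒜'
  set ℬ' := ℬ.filter (fun B => B.card = k) with hℬ'
  set c : Finset ℕ → Finset ℕ := fun A => U \ A with hc
  have hA'mem : ∀ A ∈ 𝒜', A ∈ 𝒜 ∧ A ⊆ U ∧ A.card = k := by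
    intro A hA
    simp only [h𝒜', Finset.mem_filter] at hA
    exact ⟨hA.1, h𝒜sub A hA.1, hA.2⟩
  have hB'mem : ∀ B ∈ ℬ', B ∈ ℬ ∧ B ⊆ U ∧ B.card = k := by
    intro B hB
    simp only [hℬ', Finset.mem_filter] at hB
    exact ⟨hB.1, hℬsub B hB.1, hB.2⟩
  have hccard : ∀ A ∈ 𝒜', (c A).card = k := by
    intro A hA
    obtain ⟨-, hsub, hcard⟩ := hA'mem A hA
    rw [hc]
    simp only []
    rw [Finset.card_sdiff_of_subset hsub, hUcard, hcard]
    omega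
  have himg : (𝒜'.image c).card = 𝒜'.card := by
    apply Finset.card_image_of_injOn
    intro A hA A' hA' hEq
    have h1 := (hA'mem A hA).2.1
    have h2 := (hA'mem A' hA').2.1
    have : U \ (U \ A) = U \ (U \ A') := by rw [show U \ A = c A from rfl, hEq]
    rwa [Finset.sdiff_sdiff_eq_self h1, Finset.sdiff_sdiff_eq_self h2] at this
  have hdisj1 : Disjoint 𝒜' (𝒜'.image c) := by
    rw [Finset.disjoint_left]
    intro S hS hS'
    obtain ⟨A, hA, rfl⟩ := Finset.mem_image.mp hS'
    have h1 := (hA'mem A hA).1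
    have h2 := (hA'mem _ hS).1
    obtain ⟨x, hx⟩ := hint A h1 _ h2
    simp only [Finset.mem_inter, hc, Finset.mem_sdiff] at hx
    exact hx.2.2 hx.1
  have hdisj2 : Disjoint ℬ' (𝒜'.image c) := by
    rw [Finset.disjoint_left]
    intro S hS hS'
    obtain ⟨A, hA, rfl⟩ := Finset.mem_image.mp hS'
    have h1 := (hA'mem A hA).1
    have h2 := (hB'mem _ hS).1
    obtain ⟨x, hx⟩ := hcross A h1 _ h2
    simp only [Finset.mem_inter, hc, Finset.mem_sdiff] at hx
    exact hx.2.2 hx.1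
  have hNcard : (Finset.powersetCard k U).card = n.choose k := by
    rw [Finset.card_powersetCard, hUcard]
  -- bound 1 : 2 * 𝒜'.card ≤ n.choose k
  have hb1 : 𝒜'.card + 𝒜'.card ≤ n.choose k := by
    have : (𝒜' ∪ 𝒜'.image c).card ≤ n.choose k := by
      rw [← hNcard]
      apply Finset.card_le_card
      intro S hS
      rw [Finset.mem_powersetCard]
      rcases Finset.mem_union.mp hS with h | h
      · exact ⟨(hA'mem S h).2.1, (hA'mem S h).2.2⟩
      · obtain ⟨A, hA, rfl⟩ := Finset.mem_image.mp h
        exact ⟨Finset.sdiff_subset, hccard A hA⟩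
    rwa [Finset.card_union_of_disjoint hdisj1, himg] at this
  have hb2 : ℬ'.card + 𝒜'.card ≤ n.choose k := by
    have : (ℬ' ∪ 𝒜'.image c).card ≤ n.choose k := by
      rw [← hNcard]
      apply Finset.card_le_card
      intro S hS
      rw [Finset.mem_powersetCard]
      rcases Finset.mem_union.mp hS with h | h
      · exact ⟨(hB'mem S h).2.1, (hB'mem S h).2.2⟩
      · obtain ⟨A, hA, rfl⟩ := Finset.mem_image.mp h
        exact ⟨Finset.sdiff_subset, hccard A hA⟩
    rwa [Finset.card_union_of_disjoint hdisj2, himg] at this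
  have hchoose : n.choose k = 2 * (n - 1).choose (k - 1) := by
    have h := Nat.add_one_mul_choose_eq (n - 1) (k - 1)
    have e1 : (n - 1).succ = n := by omega
    have e2 : n - 1 + 1 = n := by omega
    have e3 : k - 1 + 1 = k := by omega
    have e4 : (k - 1).succ = k := by omega
    rw [e2, e3] at h
    -- h : n * (n-1).choose (k-1) = n.choose k * k
    have : (2 * (n - 1).choose (k - 1)) * k = n.choose k * k := by
      rw [← h, hn2]; ring
    exact (Nat.mul_right_cancel hkpos this).symm
  -- final arithmetic
  rw [hkdef] at *
  have hx : (𝒜'.card : ℝ) ≤ ((n - 1).choose (n / 2 - 1) : ℝ) := by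
    have h2 : 2 * 𝒜'.card ≤ 2 * (n - 1).choose (n / 2 - 1) := by omega
    have h3 : ((2 * 𝒜'.card : ℕ) : ℝ) ≤ ((2 * (n - 1).choose (n / 2 - 1) : ℕ) : ℝ) :=
      Nat.cast_le.mpr h2
    push_cast at h3
    linarith
  have hxy : (𝒜'.card : ℝ) + (ℬ'.card : ℝ) ≤ 2 * ((n - 1).choose (n / 2 - 1) : ℝ) := by
    have : 𝒜'.card + ℬ'.card ≤ 2 * (n - 1).choose (n / 2 - 1) := by omega
    exact_mod_cast this
  nlinarith [mul_nonneg (sub_nonneg.mpr hab) (sub_nonneg.mpr hx), hb.trans hab]
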